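/- Let $H(x) = -x\log_2 x - (1-x)\log_2(1-x)$ and let $k \ge 4$ be an integer. Then the function $g(x) = \log_2(27/4)\,(k+1)x + H(3x) - kH(x)$ has a unique zero in the open interval $(0, 1/3)$. -/

import Mathlib

open Real Set Filter Topology

/-- The binary entropy function `H(x) = -x log₂ x - (1-x) log₂ (1-x)`
(with the conventions `H 0 = H 1 = 0` coming from `logb 2 0 = 0`). -/
noncomputable def binEnt (x : ℝ) : ℝ :=
  -x * Real.logb 2 x - (1 - x) * Real.logb 2 (1 - x)

lemma binEnt_eq (x : ℝ) :
    binEnt x = (Real.negMulLog x + Real.negMulLog (1 - x)) / Real.log 2 := by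
  simp only [binEnt, Real.negMulLog, Real.logb]
  ring

lemma continuous_binEnt : Continuous binEnt := by
  have : binEnt = fun x => (Real.negMulLog x + Real.negMulLog (1 - x)) / Real.log 2 :=
    funext binEnt_eq
  rw [this]
  exact ((Real.continuous_negMulLog.add
    (Real.continuous_negMulLog.comp (continuous_const.sub continuous_id))).div_const _)

lemma binEnt_zero : binEnt 0 = 0 := by simp [binEnt]

lemma binEnt_one : binEnt 1 = 0 := by simp [binEnt]

lemma log2_pos : (0:ℝ) < Real.log 2 := Real.log_pos one_lt_two

lemma hasDerivAt_binEnt {x : ℝ} (h0 : 0 < x) (h1 : x < 1) :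
    HasDerivAt binEnt (Real.logb 2 (1 - x) - Real.logb 2 x) x := by
  have hx : x ≠ 0 := h0.ne'
  have hx1 : (1 : ℝ) - x ≠ 0 := by linarith
  have hf1 : HasDerivAt Real.negMulLog (-Real.log x - 1) x := Real.hasDerivAt_negMulLog hx
  have hinner : HasDerivAt (fun y : ℝ => 1 - y) (-1) x := by
    simpa using (hasDerivAt_id x).const_sub 1
  have hf2 : HasDerivAt (fun y : ℝ => Real.negMulLog (1 - y))
      ((-Real.log (1 - x) - 1) * (-1)) x :=
    (Real.hasDerivAt_negMulLog hx1).comp x hinner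
  have h := ((hf1.add hf2).div_const (Real.log 2))
  have heq : binEnt = fun y => (Real.negMulLog y + Real.negMulLog (1 - y)) / Real.log 2 :=
    funext binEnt_eq
  rw [heq]
  refine h.congr_deriv ?_
  simp only [Real.logb]
  field_simp
  ring

/-- `gfun` is the function we study. -/
noncomputable def gfun (K x : ℝ) : ℝ :=
  Real.logb 2 (27 / 4) * (K + 1) * x + binEnt (3 * x) - K * binEnt x

/-- derivative of `gfun K` -/
noncomputable def phi (K x : ℝ) : ℝ :=
  Real.logb 2 (27 / 4) * (K + 1) + 3 * (Real.logb 2 (1 - 3 * x) - Real.logb 2 (3 * x))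
    - K * (Real.logb 2 (1 - x) - Real.logb 2 x)

/-- derivative of `phi K` -/
noncomputable def psi (K x : ℝ) : ℝ :=
  (-9 / (1 - 3 * x) - 3 / x + K / (1 - x) + K / x) / Real.log 2

lemma continuous_gfun (K : ℝ) : Continuous (gfun K) := by
  unfold gfun
  exact ((continuous_const.mul continuous_id).add
    (continuous_binEnt.comp (continuous_const.mul continuous_id))).sub
    (continuous_const.mul continuous_binEnt)

lemma gfun_zero (K : ℝ) : gfun K 0 = 0 := by
  simp [gfun, binEnt_zero]

lemma logb_third : Real.logb 2 (27 / 4) = 3 * binEnt (1 / 3) := by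
  have h2 : Real.log 2 ≠ 0 := log2_pos.ne'
  have h27 : Real.log (27 / 4) = 3 * Real.log 3 - 2 * Real.log 2 := by
    rw [Real.log_div (by norm_num) (by norm_num),
      show (27:ℝ) = 3 ^ 3 by norm_num, show (4:ℝ) = 2 ^ 2 by norm_num,
      Real.log_pow, Real.log_pow]
    push_cast; ring
  have h13 : Real.log (1 / 3) = -Real.log 3 := by
    rw [Real.log_div (by norm_num) (by norm_num), Real.log_one]; ring
  have h23 : Real.log (1 - 1 / 3) = Real.log 2 - Real.log 3 := by
    rw [show (1:ℝ) - 1/3 = 2/3 by norm_num, Real.log_div (by norm_num) (by norm_num)]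
  simp only [binEnt, Real.logb, h27, h13, h23]
  field_simp
  ring

lemma gfun_third (K : ℝ) : gfun K (1 / 3) = binEnt (1 / 3) := by
  have h3 : (3:ℝ) * (1/3) = 1 := by norm_num
  rw [gfun, h3, binEnt_one, logb_third]
  ring

lemma binEnt_third_pos : 0 < binEnt (1 / 3) := by
  have h := logb_third
  have : (0:ℝ) < Real.logb 2 (27 / 4) := Real.logb_pos (by norm_num) (by norm_num)
  linarith

lemma hasDerivAt_gfun (K : ℝ) {x : ℝ} (h0 : 0 < x) (h1 : x < 1 / 3) :
    HasDerivAt (gfun K) (phi K x) x := by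
  have h3 : HasDerivAt (fun y : ℝ => 3 * y) 3 x := by
    simpa using (hasDerivAt_id x).const_mul (3:ℝ)
  have hb3 : HasDerivAt (fun y : ℝ => binEnt (3 * y))
      ((Real.logb 2 (1 - 3 * x) - Real.logb 2 (3 * x)) * 3) x :=
    (hasDerivAt_binEnt (by linarith) (by linarith)).comp x h3
  have hb : HasDerivAt (fun y : ℝ => K * binEnt y)
      (K * (Real.logb 2 (1 - x) - Real.logb 2 x)) x :=
    (hasDerivAt_binEnt h0 (by linarith)).const_mul K
  have hlin : HasDerivAt (fun y : ℝ => Real.logb 2 (27 / 4) * (K + 1) * y)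
      (Real.logb 2 (27 / 4) * (K + 1)) x := by
    simpa using (hasDerivAt_id x).const_mul (Real.logb 2 (27 / 4) * (K + 1))
  have h := (hlin.add hb3).sub hb
  refine h.congr_deriv ?_
  unfold phi
  ring

lemma hasDerivAt_logb_affine {a b x : ℝ} (h : a + b * x ≠ 0) :
    HasDerivAt (fun y : ℝ => Real.logb 2 (a + b * y)) (b / ((a + b * x) * Real.log 2)) x := by
  have hinner : HasDerivAt (fun y : ℝ => a + b * y) b x := by
    simpa using ((hasDerivAt_id x).const_mul b).const_add a
  have h2 := ((Real.hasDerivAt_log h).comp x hinner).div_const (Real.log 2)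
  have hval : b / ((a + b * x) * Real.log 2) = (a + b * x)⁻¹ * b / Real.log 2 := by
    field_simp
  rw [hval]
  exact h2

lemma hasDerivAt_phi (K : ℝ) {x : ℝ} (h0 : 0 < x) (h1 : x < 1 / 3) :
    HasDerivAt (phi K) (psi K x) x := by
  have hx13 : (1:ℝ) - 3 * x ≠ 0 := by linarith
  have hx3 : (3:ℝ) * x ≠ 0 := by positivity
  have hx1 : (1:ℝ) - x ≠ 0 := by linarith
  have hx : x ≠ 0 := h0.ne'
  have h₁ : HasDerivAt (fun y : ℝ => Real.logb 2 (1 - 3 * y))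
      ((-3) / ((1 - 3 * x) * Real.log 2)) x := by
    have := hasDerivAt_logb_affine (a := 1) (b := -3) (x := x)
      (by rw [neg_mul, ← sub_eq_add_neg]; exact hx13)
    simpa [sub_eq_add_neg, neg_mul] using this
  have h₂ : HasDerivAt (fun y : ℝ => Real.logb 2 (3 * y))
      (3 / ((3 * x) * Real.log 2)) x := by
    have := hasDerivAt_logb_affine (a := 0) (b := 3) (x := x) (by simpa using hx3)
    simpa using this
  have h₃ : HasDerivAt (fun y : ℝ => Real.logb 2 (1 - y))
      ((-1) / ((1 - x) * Real.log 2)) x := by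
    have := hasDerivAt_logb_affine (a := 1) (b := -1) (x := x)
      (by rw [neg_one_mul, ← sub_eq_add_neg]; exact hx1)
    simpa [sub_eq_add_neg, neg_one_mul] using this
  have h₄ : HasDerivAt (fun y : ℝ => Real.logb 2 y)
      (1 / (x * Real.log 2)) x := by
    have := hasDerivAt_logb_affine (a := 0) (b := 1) (x := x) (by simpa using hx)
    simpa using this
  have h := (((h₁.sub h₂).const_mul 3).const_add
      (Real.logb 2 (27 / 4) * (K + 1))).sub ((h₃.sub h₄).const_mul K)
  refine h.congr_deriv ?_
  unfold psi
  field_simp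
  ring

lemma continuousAt_phi (K : ℝ) {x : ℝ} (h0 : 0 < x) (h1 : x < 1 / 3) :
    ContinuousAt (phi K) x :=
  (hasDerivAt_phi K h0 h1).continuousAt

/-- the inflection point of `gfun`. -/
noncomputable def xin (K : ℝ) : ℝ := (K - 3) / (3 * (K - 1))

section K
variable {K : ℝ} (hK : 4 ≤ K)
include hK

lemma xin_pos : 0 < xin K := by
  unfold xin; apply div_pos <;> linarith

lemma xin_lt : xin K < 1 / 3 := by
  unfold xin
  rw [div_lt_div_iff₀ (by linarith) (by norm_num)]
  linarith

omit hK in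
lemma psi_eq {x : ℝ} (h0 : 0 < x) (h1 : x < 1 / 3) :
    psi K x = ((K - 3) - 3 * (K - 1) * x) / (x * (1 - x) * (1 - 3 * x) * Real.log 2) := by
  have hx13 : (0:ℝ) < 1 - 3 * x := by linarith
  have hx1 : (0:ℝ) < 1 - x := by linarith
  have := log2_pos
  unfold psi
  rw [div_eq_div_iff (by positivity) (by positivity)]
  field_simp
  ring

lemma psi_pos {x : ℝ} (h0 : 0 < x) (h1 : x < xin K) : 0 < psi K x := by
  have hlt : x < 1 / 3 := h1.trans (xin_lt hK)
  rw [psi_eq h0 hlt]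
  have h3K : (0:ℝ) < 3 * (K - 1) := by linarith
  have hnum : 0 < (K - 3) - 3 * (K - 1) * x := by
    unfold xin at h1
    have := (lt_div_iff₀ h3K).mp h1
    nlinarith
  have h13 : (0:ℝ) < 1 - 3 * x := by linarith
  have h1' : (0:ℝ) < 1 - x := by linarith
  have := log2_pos
  positivity

lemma psi_neg {x : ℝ} (h0 : xin K < x) (h1 : x < 1 / 3) : psi K x < 0 := by
  have h0' : 0 < x := (xin_pos hK).trans h0
  rw [psi_eq h0' h1]
  have h3K : (0:ℝ) < 3 * (K - 1) := by linarith
  have hnum : (K - 3) - 3 * (K - 1) * x < 0 := by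
    unfold xin at h0
    have := (div_lt_iff₀ h3K).mp h0
    nlinarith
  have h13 : (0:ℝ) < 1 - 3 * x := by linarith
  have h1' : (0:ℝ) < 1 - x := by linarith
  have hd : 0 < x * (1 - x) * (1 - 3 * x) * Real.log 2 := by
    have := log2_pos; positivity
  exact div_neg_of_neg_of_pos hnum hd

lemma phi_strictMonoOn : StrictMonoOn (phi K) (Ioc 0 (xin K)) := by
  apply strictMonoOn_of_deriv_pos (convex_Ioc _ _)
  · intro x hx
    exact (continuousAt_phi K hx.1 (hx.2.trans_lt (xin_lt hK))).continuousWithinAt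
  · intro x hx
    rw [interior_Ioc] at hx
    rw [(hasDerivAt_phi K hx.1 (hx.2.trans (xin_lt hK))).deriv]
    exact psi_pos hK hx.1 hx.2

lemma phi_strictAntiOn : StrictAntiOn (phi K) (Ico (xin K) (1 / 3)) := by
  apply strictAntiOn_of_deriv_neg (convex_Ico _ _)
  · intro x hx
    exact (continuousAt_phi K ((xin_pos hK).trans_le hx.1) hx.2).continuousWithinAt
  · intro x hx
    rw [interior_Ico] at hx
    rw [(hasDerivAt_phi K ((xin_pos hK).trans hx.1) hx.2).deriv]
    exact psi_neg hK hx.1 hx.2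

lemma tendsto_phi_zero : Tendsto (phi K) (𝓝[>] (0:ℝ)) atBot := by
  have hrw : ∀ᶠ x in 𝓝[>] (0:ℝ), phi K x =
      (Real.logb 2 (27/4) * (K + 1) + 3 * Real.logb 2 (1 - 3 * x)
        - 3 * Real.logb 2 3 - K * Real.logb 2 (1 - x))
        + (K - 3) * Real.logb 2 x := by
    filter_upwards [self_mem_nhdsWithin] with x (hx : 0 < x)
    rw [phi, Real.logb_mul (by norm_num) hx.ne']
    ring
  rw [tendsto_congr' hrw]
  have c1 : ContinuousAt (fun x : ℝ => Real.logb 2 (1 - 3 * x)) 0 := by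
    have hin : ContinuousAt (fun x : ℝ => 1 - 3 * x) 0 := by fun_prop
    exact ContinuousAt.comp (x := (0:ℝ)) (g := Real.logb 2)
      (f := fun x : ℝ => 1 - 3 * x) (Real.continuousAt_logb (by norm_num)) hin
  have c2 : ContinuousAt (fun x : ℝ => Real.logb 2 (1 - x)) 0 := by
    have hin : ContinuousAt (fun x : ℝ => 1 - x) 0 := by fun_prop
    exact ContinuousAt.comp (x := (0:ℝ)) (g := Real.logb 2)
      (f := fun x : ℝ => 1 - x) (Real.continuousAt_logb (by norm_num)) hin
  have hcont : Tendsto (fun x : ℝ =>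
      Real.logb 2 (27/4) * (K + 1) + 3 * Real.logb 2 (1 - 3 * x)
        - 3 * Real.logb 2 3 - K * Real.logb 2 (1 - x)) (𝓝[>] (0:ℝ))
      (𝓝 (Real.logb 2 (27/4) * (K + 1) + 3 * Real.logb 2 (1 - 3 * 0)
        - 3 * Real.logb 2 3 - K * Real.logb 2 (1 - 0))) := by
    apply Tendsto.mono_left _ nhdsWithin_le_nhds
    exact (((continuousAt_const.add (c1.const_mul 3)).sub continuousAt_const).sub
      (c2.const_mul K))
  apply hcont.add_atBot
  have hlogb : Tendsto (fun x : ℝ => Real.logb 2 x) (𝓝[>] (0:ℝ)) atBot := by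
    simpa [Real.logb] using
      Real.tendsto_log_nhdsGT_zero.atBot_div_const log2_pos
  exact hlogb.const_mul_atBot (by linarith)

omit hK in
lemma tendsto_phi_third : Tendsto (phi K) (𝓝[<] (1/3:ℝ)) atBot := by
  have c1 : ContinuousAt (fun x : ℝ => Real.logb 2 (3 * x)) (1/3) := by
    have hin : ContinuousAt (fun x : ℝ => 3 * x) (1/3:ℝ) := by fun_prop
    exact ContinuousAt.comp (x := (1/3:ℝ)) (g := Real.logb 2)
      (f := fun x : ℝ => 3 * x) (Real.continuousAt_logb (by norm_num)) hin
  have c2 : ContinuousAt (fun x : ℝ => Real.logb 2 (1 - x)) (1/3) := by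
    have hin : ContinuousAt (fun x : ℝ => 1 - x) (1/3:ℝ) := by fun_prop
    exact ContinuousAt.comp (x := (1/3:ℝ)) (g := Real.logb 2)
      (f := fun x : ℝ => 1 - x) (Real.continuousAt_logb (by norm_num)) hin
  have c3 : ContinuousAt (fun x : ℝ => Real.logb 2 x) (1/3) :=
    Real.continuousAt_logb (by norm_num)
  have hcont : Tendsto (fun x : ℝ =>
      Real.logb 2 (27/4) * (K + 1) - 3 * Real.logb 2 (3 * x)
        - K * (Real.logb 2 (1 - x) - Real.logb 2 x)) (𝓝[<] (1/3:ℝ))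
      (𝓝 (Real.logb 2 (27/4) * (K + 1) - 3 * Real.logb 2 (3 * (1/3))
        - K * (Real.logb 2 (1 - 1/3) - Real.logb 2 (1/3)))) := by
    apply Tendsto.mono_left _ nhdsWithin_le_nhds
    exact ((continuousAt_const.sub (c1.const_mul 3)).sub ((c2.sub c3).const_mul K))
  have hbot : Tendsto (fun x : ℝ => 3 * Real.logb 2 (1 - 3 * x)) (𝓝[<] (1/3:ℝ)) atBot := by
    have hmap : Tendsto (fun x : ℝ => 1 - 3 * x) (𝓝[<] (1/3:ℝ)) (𝓝[>] (0:ℝ)) := by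
      rw [tendsto_nhdsWithin_iff]
      constructor
      · apply Tendsto.mono_left _ nhdsWithin_le_nhds
        have hc : Continuous (fun x : ℝ => 1 - 3 * x) := by fun_prop
        have := hc.tendsto (1/3:ℝ)
        norm_num at this
        exact this
      · filter_upwards [self_mem_nhdsWithin] with x (hx : x < 1/3)
        simp only [mem_Ioi]; linarith
    have hlogb : Tendsto (fun x : ℝ => Real.logb 2 x) (𝓝[>] (0:ℝ)) atBot := by
      simpa [Real.logb] using
        Real.tendsto_log_nhdsGT_zero.atBot_div_const log2_pos
    exact (hlogb.comp hmap).const_mul_atBot (by norm_num)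
  have := hcont.add_atBot hbot
  apply this.congr
  intro x
  rw [phi]
  ring

lemma phi_xin_pos : 0 < phi K (xin K) := by
  by_contra h
  push_neg at h
  have hx0 := xin_pos hK
  have hx1 := xin_lt hK
  have hnonpos : ∀ x ∈ Ioo (0:ℝ) (1/3), phi K x ≤ 0 := by
    intro x hx
    rcases le_or_gt x (xin K) with hle | hgt
    · exact ((phi_strictMonoOn hK).monotoneOn ⟨hx.1, hle⟩ ⟨hx0, le_refl _⟩ hle).trans h
    · exact (((phi_strictAntiOn hK) ⟨le_refl _, hx1⟩ ⟨hgt.le, hx.2⟩ hgt).le).trans h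
  have hanti : AntitoneOn (gfun K) (Icc 0 (1/3)) := by
    apply antitoneOn_of_deriv_nonpos (convex_Icc _ _)
      ((continuous_gfun K).continuousOn)
    · intro x hx
      rw [interior_Icc] at hx
      exact (hasDerivAt_gfun K hx.1 hx.2).differentiableAt.differentiableWithinAt
    · intro x hx
      rw [interior_Icc] at hx
      rw [(hasDerivAt_gfun K hx.1 hx.2).deriv]
      exact hnonpos x hx
  have := hanti (left_mem_Icc.mpr (by norm_num)) (right_mem_Icc.mpr (by norm_num))
    (by norm_num)
  rw [gfun_zero, gfun_third] at this
  exact absurd this (not_le.mpr binEnt_third_pos)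

end K

theorem unique_zero_alpha2 (k : ℕ) (hk : 4 ≤ k) :
    ∃! x : ℝ, x ∈ Set.Ioo (0 : ℝ) (1 / 3) ∧
      Real.logb 2 (27 / 4) * (k + 1) * x + binEnt (3 * x) - k * binEnt x = 0 := by
  set K : ℝ := (k : ℝ) with hKdef
  have hK : 4 ≤ K := by rw [hKdef]; exact_mod_cast hk
  have hx0 := xin_pos hK
  have hx1 := xin_lt hK
  -- find x₁ with phi < 0 close to 0
  obtain ⟨x₁, hφx₁, hx₁⟩ : ∃ x₁, phi K x₁ < 0 ∧ x₁ ∈ Ioo (0:ℝ) (xin K) := by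
    have h1 := (tendsto_phi_zero hK).eventually (eventually_lt_atBot (0:ℝ))
    have h2 : Ioo (0:ℝ) (xin K) ∈ 𝓝[>] (0:ℝ) :=
      Ioo_mem_nhdsGT_of_mem ⟨le_refl _, hx0⟩
    exact (h1.and h2).exists
  -- find x₂ with phi < 0 close to 1/3
  obtain ⟨x₂, hφx₂, hx₂⟩ : ∃ x₂, phi K x₂ < 0 ∧ x₂ ∈ Ioo (xin K) (1/3) := by
    have h1 := (tendsto_phi_third (K := K)).eventually (eventually_lt_atBot (0:ℝ))
    have h2 : Ioo (xin K) (1/3:ℝ) ∈ 𝓝[<] (1/3:ℝ) :=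
      Ioo_mem_nhdsLT_of_mem ⟨hx1, le_refl _⟩
    exact (h1.and h2).exists
  have hφxin := phi_xin_pos hK
  -- zero `a` of phi on (x₁, xin K)
  obtain ⟨a, haI, hφa⟩ : ∃ a ∈ Icc x₁ (xin K), phi K a = 0 := by
    have hc : ContinuousOn (phi K) (Icc x₁ (xin K)) := fun x hx =>
      (continuousAt_phi K (hx₁.1.trans_le hx.1)
        (lt_of_le_of_lt hx.2 hx1)).continuousWithinAt
    have := intermediate_value_Icc hx₁.2.le hc
    have h0 : (0:ℝ) ∈ Icc (phi K x₁) (phi K (xin K)) := ⟨hφx₁.le, hφxin.le⟩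
    obtain ⟨a, ha, ha'⟩ := this h0
    exact ⟨a, ha, ha'⟩
  have ha₁ : x₁ < a := lt_of_le_of_ne haI.1 (by rintro rfl; exact hφx₁.ne hφa)
  have ha₂ : a < xin K := lt_of_le_of_ne haI.2 (by rintro rfl; exact hφxin.ne' hφa)
  have ha0 : 0 < a := hx₁.1.trans ha₁
  -- zero `b` of phi on (xin K, x₂)
  obtain ⟨b, hbI, hφb⟩ : ∃ b ∈ Icc (xin K) x₂, phi K b = 0 := by
    have hc : ContinuousOn (phi K) (Icc (xin K) x₂) := fun x hx =>
      (continuousAt_phi K (hx0.trans_le hx.1)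
        (lt_of_le_of_lt hx.2 hx₂.2)).continuousWithinAt
    have := intermediate_value_Icc' hx₂.1.le hc
    have h0 : (0:ℝ) ∈ Icc (phi K x₂) (phi K (xin K)) := ⟨hφx₂.le, hφxin.le⟩
    obtain ⟨b, hb, hb'⟩ := this h0
    exact ⟨b, hb, hb'⟩
  have hb₁ : xin K < b := lt_of_le_of_ne hbI.1 (by rintro rfl; exact hφxin.ne' hφb)
  have hb₂ : b < x₂ := lt_of_le_of_ne hbI.2 (by rintro rfl; exact hφx₂.ne hφb)
  have hb13 : b < 1/3 := hb₂.trans hx₂.2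
  have hab : a < b := ha₂.trans hb₁
  -- sign of phi
  have hφneg₁ : ∀ x ∈ Ioo (0:ℝ) a, phi K x < 0 := by
    intro x hx
    have := (phi_strictMonoOn hK) ⟨hx.1, (hx.2.trans ha₂).le⟩ ⟨ha0, ha₂.le⟩ hx.2
    rwa [hφa] at this
  have hφpos : ∀ x ∈ Ioo a b, phi K x > 0 := by
    intro x hx
    rcases le_or_gt x (xin K) with hle | hgt
    · have := (phi_strictMonoOn hK) ⟨ha0, ha₂.le⟩ ⟨ha0.trans hx.1, hle⟩ hx.1
      rwa [hφa] at this
    · have := (phi_strictAntiOn hK) ⟨hgt.le, (hx.2.trans hb13)⟩ ⟨hb₁.le, hb13⟩ hx.2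
      rwa [hφb] at this
  have hφneg₂ : ∀ x ∈ Ioo b (1/3:ℝ), phi K x < 0 := by
    intro x hx
    have := (phi_strictAntiOn hK) ⟨hb₁.le, hb13⟩ ⟨(hb₁.trans hx.1).le, hx.2⟩ hx.1
    rwa [hφb] at this
  -- monotonicity of gfun on the three pieces
  have hg_anti₁ : StrictAntiOn (gfun K) (Icc 0 a) := by
    apply strictAntiOn_of_deriv_neg (convex_Icc _ _) ((continuous_gfun K).continuousOn)
    intro x hx
    rw [interior_Icc] at hx
    rw [(hasDerivAt_gfun K hx.1 ((hx.2.trans ha₂).trans hx1)).deriv]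
    exact hφneg₁ x hx
  have hg_mono : StrictMonoOn (gfun K) (Icc a b) := by
    apply strictMonoOn_of_deriv_pos (convex_Icc _ _) ((continuous_gfun K).continuousOn)
    intro x hx
    rw [interior_Icc] at hx
    rw [(hasDerivAt_gfun K (ha0.trans hx.1) (hx.2.trans hb13)).deriv]
    exact hφpos x hx
  have hg_anti₂ : StrictAntiOn (gfun K) (Icc b (1/3)) := by
    apply strictAntiOn_of_deriv_neg (convex_Icc _ _) ((continuous_gfun K).continuousOn)
    intro x hx
    rw [interior_Icc] at hx
    rw [(hasDerivAt_gfun K ((hx0.trans hb₁).trans hx.1) hx.2).deriv]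
    exact hφneg₂ x hx
  -- values
  have hga : gfun K a < 0 := by
    have := hg_anti₁ (left_mem_Icc.mpr ha0.le) (right_mem_Icc.mpr ha0.le) ha0
    rwa [gfun_zero] at this
  have hgb : 0 < gfun K b := by
    have := hg_anti₂ (left_mem_Icc.mpr hb13.le) (right_mem_Icc.mpr hb13.le) hb13
    rw [gfun_third] at this
    linarith [binEnt_third_pos]
  -- existence of zero of gfun
  obtain ⟨z, hzI, hgz⟩ : ∃ z ∈ Icc a b, gfun K z = 0 := by
    have := intermediate_value_Icc hab.le ((continuous_gfun K).continuousOn)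
    obtain ⟨z, hz, hz'⟩ := this (⟨hga.le, hgb.le⟩ : (0:ℝ) ∈ Icc (gfun K a) (gfun K b))
    exact ⟨z, hz, hz'⟩
  have hza : a < z := lt_of_le_of_ne hzI.1 (by rintro rfl; exact hga.ne hgz)
  have hzb : z < b := lt_of_le_of_ne hzI.2 (by rintro rfl; exact hgb.ne' hgz)
  have hz03 : z ∈ Ioo (0:ℝ) (1/3) := ⟨ha0.trans hza, hzb.trans hb13⟩
  refine ⟨z, ⟨hz03, hgz⟩, ?_⟩
  rintro y ⟨hy, hgy⟩
  -- uniqueness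
  have hgy' : gfun K y = 0 := hgy
  rcases lt_trichotomy y a with h | h | h
  · exfalso
    have := hg_anti₁ (left_mem_Icc.mpr (ha0.le)) ⟨hy.1.le, h.le⟩ hy.1
    rw [gfun_zero, hgy'] at this
    exact lt_irrefl 0 this
  · exfalso; rw [h] at hgy'; exact hga.ne hgy'
  rcases lt_trichotomy y b with h' | h' | h'
  · exact hg_mono.injOn ⟨h.le, h'.le⟩ ⟨hza.le, hzb.le⟩ (hgy'.trans hgz.symm)
  · exfalso; rw [h'] at hgy'; exact hgb.ne' hgy'
  · exfalso
    have := hg_anti₂ ⟨h'.le, hy.2.le⟩ (right_mem_Icc.mpr hb13.le) hy.2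
    rw [gfun_third, hgy'] at this
    linarith [binEnt_third_pos]
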